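/- Let M be a set, q ≥ 0, and let A : Fin(q+1) → Set M be a family of pairwise disjoint subsets whose union is M. Define φ : (Fin(q+1) → M) → ℤ by φ(x) = Σ_{σ ∈ Perm(Fin(q+1))} sgn(σ) · Π_{i} 1_{A(σ(i))}(x(i)), where 1_S denotes the indicator function of S. Then φ is a coarse cocycle: for every x : Fin(q+2) → M, Σ_{i=0}^{q+1} (−1)^i φ(x ∘ succAbove_i) = 0, where x ∘ succAbove_i denotes the tuple obtained from x by omitting the i-th entry. -/
import Mathlib


open Set

/-- The antisymmetric cochain associated to a partition is a coarse cocycle: its coboundary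
vanishes. This uses only that the sets `A i` are pairwise disjoint and cover `M`. -/
theorem partition_cochain_is_cocycle {M : Type*} (q : ℕ) (A : Fin (q + 1) → Set M)
    (hdisj : Pairwise (Function.onFun Disjoint A)) (hcov : (⋃ i, A i) = univ)
    (φ : (Fin (q + 1) → M) → ℤ)
    (hφ : ∀ x : Fin (q + 1) → M,
      φ x = ∑ σ : Equiv.Perm (Fin (q + 1)),
        (Equiv.Perm.sign σ : ℤ) *
          ∏ i, (A (σ i)).indicator (fun _ => (1 : ℤ)) (x i)) :
    ∀ x : Fin (q + 2) → M,
      ∑ i : Fin (q + 2), (-1 : ℤ) ^ (i : ℕ) * φ (x ∘ i.succAbove) = 0 := by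
  intro x
  -- the big matrix: first row all ones, remaining rows indicator rows
  set N : Matrix (Fin (q + 2)) (Fin (q + 2)) ℤ :=
    Matrix.of (Fin.cons (fun _ => 1)
      (fun a j => (A a).indicator (fun _ => (1 : ℤ)) (x j))) with hN
  -- each point lies in exactly one part
  have hmem : ∀ m : M, ∃! a : Fin (q + 1), m ∈ A a := by
    intro m
    have : m ∈ ⋃ i, A i := hcov ▸ mem_univ m
    obtain ⟨a, ha⟩ := mem_iUnion.mp this
    refine ⟨a, ha, fun b hb => ?_⟩
    by_contra hne
    exact (hdisj hne).le_bot ⟨hb, ha⟩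
  -- the sum of indicator row entries is 1
  have hrow : ∀ m : M, (∑ a : Fin (q + 1), (A a).indicator (fun _ => (1 : ℤ)) m) = 1 := by
    intro m
    obtain ⟨a, ha, huniq⟩ := hmem m
    rw [Finset.sum_eq_single a]
    · simp [Set.indicator_of_mem ha]
    · intro b _ hb
      have : m ∉ A b := fun h => hb (huniq b h)
      simp [Set.indicator_of_notMem this]
    · simp
  -- row 0 of N is the sum of the other rows
  have hrow0 : N 0 = ∑ k : Fin (q + 2),
      (if k = 0 then (0 : ℤ) else 1) • N k := by
    funext j
    simp only [Finset.sum_apply, Fin.sum_univ_succ, Fin.succ_ne_zero, if_true, if_false,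
      ite_true, ite_false, Pi.smul_apply, smul_eq_mul, zero_mul, one_mul, zero_add, hN,
      Matrix.of_apply, Fin.cons_zero, Fin.cons_succ]
    have h := hrow (x j)
    rw [Fin.sum_univ_succ] at h
    exact h.symm
  -- hence det N = 0
  have hdet : N.det = 0 := by
    have := Matrix.det_updateRow_sum N 0 (fun k => if k = 0 then (0 : ℤ) else 1)
    rw [← hrow0, Matrix.updateRow_eq_self] at this
    simpa using this
  -- φ of a face is the minor determinant
  have hminor : ∀ j : Fin (q + 2),
      (N.submatrix Fin.succ j.succAbove).det = φ (x ∘ j.succAbove) := by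
    intro j
    rw [Matrix.det_apply', hφ]
    refine Finset.sum_congr rfl fun σ _ => ?_
    simp [hN]
  -- Laplace expansion along row 0
  have hexp := Matrix.det_succ_row_zero N
  rw [hdet] at hexp
  have : ∀ j : Fin (q + 2), N 0 j = 1 := by
    intro j; simp [hN]
  calc ∑ i : Fin (q + 2), (-1 : ℤ) ^ (i : ℕ) * φ (x ∘ i.succAbove)
      = ∑ j : Fin (q + 2), (-1 : ℤ) ^ (j : ℕ) * N 0 j *
          (N.submatrix Fin.succ j.succAbove).det := by
        refine Finset.sum_congr rfl fun j _ => ?_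
        rw [hminor j, this j, mul_one]
    _ = 0 := hexp.symm
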